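/- arXiv:1502.01251 — 2 statements merged into one kernel-verified Lean document; each statement's English description precedes it below -/
import Mathlib

section
/- Let 0 ≤ σ < π/18 and set v_j = (cos(π/6 + σ + jπ/3), sin(π/6 + σ + jπ/3)) for j = 0,…,5. For every set A ⊆ H with Metric.diam A ≤ 1, there exists k ∈ Fin 6 such that the rotation ρ about the origin by angle kπ/3 satisfies: ρ '' A ⊆ H, ρ '' A is disjoint from {x : ⟪x, v_0⟫ > 1/2}, and ρ '' A is disjoint from {x : ⟪x, v_2⟫ > 1/2}. (That is, any set of diameter at most 1 inside the hexagon can be rotated by a multiple of 60° so as to avoid the interiors of the two designated triangles of H ∖ H'_σ.) -/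
open Real RealInnerProductSpace

noncomputable section

local notation "ℝ²" => EuclideanSpace ℝ (Fin 2)

/-- The point of the plane with the given coordinates. -/
def pt (a b : ℝ) : ℝ² := (WithLp.equiv 2 (Fin 2 → ℝ)).symm ![a, b]

/-- The outward unit normals of the sides of the regular hexagon. -/
def u (k : Fin 6) : ℝ² := pt (Real.cos ((k : ℕ) * π / 3)) (Real.sin ((k : ℕ) * π / 3))

/-- The closed regular hexagon with inradius `1/2` centered at the origin. -/
def Hex : Set ℝ² := {x | ∀ k : Fin 6, ⟪x, u k⟫ ≤ 1 / 2}

/-- The outward unit normals of the sides of the hexagon rotated by `π/6 + σ`. -/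
def v (σ : ℝ) (j : Fin 6) : ℝ² :=
  pt (Real.cos (π / 6 + σ + (j : ℕ) * π / 3)) (Real.sin (π / 6 + σ + (j : ℕ) * π / 3))

/-- Rotation of the plane about the origin by the angle `θ`. -/
def rot (θ : ℝ) (x : ℝ²) : ℝ² :=
  pt (Real.cos θ * x 0 - Real.sin θ * x 1) (Real.sin θ * x 0 + Real.cos θ * x 1)

lemma inner_pt (x : ℝ²) (a b : ℝ) : ⟪x, pt a b⟫ = x 0 * a + x 1 * b := by
  simp [pt, PiLp.inner_apply, Fin.sum_univ_two]
  ring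

lemma norm_pt (a b : ℝ) (h : a^2 + b^2 = 1) : ‖pt a b‖ = 1 := by
  have : ‖pt a b‖ = Real.sqrt (a^2 + b^2) := by
    rw [EuclideanSpace.norm_eq]
    simp [pt, Fin.sum_univ_two, sq_abs]
  rw [this, h, Real.sqrt_one]

lemma norm_v (σ : ℝ) (j : Fin 6) : ‖v σ j‖ = 1 :=
  norm_pt _ _ (Real.cos_sq_add_sin_sq _)

lemma shift36 (β : ℝ) (j k : Fin 6) :
    Real.cos (β + (j:ℕ)*π/3 - (k:ℕ)*π/3) = Real.cos (β + ((j-k : Fin 6):ℕ)*π/3) ∧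
    Real.sin (β + (j:ℕ)*π/3 - (k:ℕ)*π/3) = Real.sin (β + ((j-k : Fin 6):ℕ)*π/3) := by
  set t : ℤ := if (k:ℕ) ≤ (j:ℕ) then 0 else -1 with ht
  have hz : ((j:ℕ):ℤ) - ((k:ℕ):ℤ) = (((j-k : Fin 6):ℕ):ℤ) + 6 * t := by
    simp only [Fin.sub_def]
    rw [ht]
    split_ifs with h <;> push_cast <;> omega
  have hr : β + (j:ℕ)*π/3 - (k:ℕ)*π/3 = (β + ((j-k : Fin 6):ℕ)*π/3) + t*(2*π) := by
    have h2 := congrArg (fun z : ℤ => (z:ℝ)) hz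
    push_cast at h2
    nlinarith [h2, Real.pi_pos]
  constructor <;> rw [hr]
  · exact Real.cos_add_int_mul_two_pi _ t
  · exact Real.sin_add_int_mul_two_pi _ t

lemma inner_rot (θ α : ℝ) (x : ℝ²) :
    ⟪rot θ x, pt (Real.cos α) (Real.sin α)⟫
      = x 0 * Real.cos (α - θ) + x 1 * Real.sin (α - θ) := by
  have h0 : rot θ x 0 = Real.cos θ * x 0 - Real.sin θ * x 1 := rfl
  have h1 : rot θ x 1 = Real.sin θ * x 0 + Real.cos θ * x 1 := rfl
  rw [inner_pt, h0, h1, Real.cos_sub, Real.sin_sub]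
  ring

lemma inner_rot_v (σ : ℝ) (k j : Fin 6) (x : ℝ²) :
    ⟪rot ((k:ℕ)*π/3) x, v σ j⟫ = ⟪x, v σ (j - k)⟫ := by
  rw [v, v, inner_rot, inner_pt, (shift36 (π/6 + σ) j k).1, (shift36 (π/6 + σ) j k).2]

lemma inner_rot_u (k j : Fin 6) (x : ℝ²) :
    ⟪rot ((k:ℕ)*π/3) x, u j⟫ = ⟪x, u (j - k)⟫ := by
  have h := shift36 0 j k
  simp only [zero_add] at h
  rw [u, u, inner_rot, inner_pt, h.1, h.2]

lemma v_opp (σ : ℝ) (j : Fin 6) (x : ℝ²) : ⟪x, v σ (j+3)⟫ = -⟪x, v σ j⟫ := by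
  set t : ℤ := if (j:ℕ) < 3 then 0 else -1 with ht
  have hz : ((((j+3 : Fin 6)):ℕ):ℤ) = ((j:ℕ):ℤ) + 3 + 6 * t := by
    simp only [Fin.add_def]
    rw [ht]
    split_ifs with h <;> push_cast <;> omega
  have hr : π/6 + σ + ((j+3 : Fin 6):ℕ)*π/3 = (π/6 + σ + (j:ℕ)*π/3 + π) + t*(2*π) := by
    have h2 := congrArg (fun z : ℤ => (z:ℝ)) hz
    push_cast at h2
    nlinarith [h2, Real.pi_pos]
  have hc : Real.cos (π/6 + σ + ((j+3 : Fin 6):ℕ)*π/3) = -Real.cos (π/6 + σ + (j:ℕ)*π/3) := by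
    rw [hr, Real.cos_add_int_mul_two_pi, Real.cos_add_pi]
  have hs : Real.sin (π/6 + σ + ((j+3 : Fin 6):ℕ)*π/3) = -Real.sin (π/6 + σ + (j:ℕ)*π/3) := by
    rw [hr, Real.sin_add_int_mul_two_pi, Real.sin_add_pi]
  rw [v, v, inner_pt, inner_pt, hc, hs]
  ring

def bad (σ : ℝ) (A : Set ℝ²) (j : Fin 6) : Prop := ∃ x ∈ A, 1/2 < ⟪x, v σ j⟫

lemma hex_bounded : Bornology.IsBounded Hex := by
  apply (Metric.isBounded_closedBall (x := (0:ℝ²)) (r := 2)).subset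
  intro x hx
  have h0 := hx 0
  have h3 := hx 3
  have h1 := hx 1
  have h2 := hx 2
  have h4 := hx 4
  have h5 := hx 5
  rw [u, inner_pt] at h0 h1 h2 h3 h4 h5
  simp only [show (((0:Fin 6)):ℕ) = 0 from rfl, show (((1:Fin 6)):ℕ) = 1 from rfl,
    show (((2:Fin 6)):ℕ) = 2 from rfl, show (((3:Fin 6)):ℕ) = 3 from rfl,
    show (((4:Fin 6)):ℕ) = 4 from rfl, show (((5:Fin 6)):ℕ) = 5 from rfl] at h0 h1 h2 h3 h4 h5
  norm_num at h0 h1 h2 h3 h4 h5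
  rw [show (2:ℝ)*π/3 = π - π/3 by ring, Real.cos_pi_sub, Real.sin_pi_sub,
    Real.cos_pi_div_three, Real.sin_pi_div_three] at h2
  rw [show (4:ℝ)*π/3 = π/3 + π by ring, Real.cos_add_pi, Real.sin_add_pi,
    Real.cos_pi_div_three, Real.sin_pi_div_three] at h4
  rw [show (5:ℝ)*π/3 = -(π/3) + 2*π by ring, Real.cos_add_two_pi, Real.sin_add_two_pi,
    Real.cos_neg, Real.sin_neg, Real.cos_pi_div_three, Real.sin_pi_div_three] at h5
  have s3 : Real.sqrt 3 ^ 2 = 3 := Real.sq_sqrt (by norm_num)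
  have s3' : (1:ℝ) ≤ Real.sqrt 3 := by nlinarith [Real.sqrt_nonneg 3]
  have hx1 : x 1 ≤ 1 := by nlinarith
  have hx1' : -1 ≤ x 1 := by nlinarith
  have hx0 : x 0 ≤ 1/2 := by linarith
  have hx0' : -(1/2) ≤ x 0 := by linarith
  rw [Metric.mem_closedBall, dist_zero_right]
  have hn : ‖x‖ = Real.sqrt (x 0 ^ 2 + x 1 ^ 2) := by
    rw [EuclideanSpace.norm_eq]
    simp [Fin.sum_univ_two, sq_abs]
  rw [hn]
  have : Real.sqrt (x 0 ^ 2 + x 1 ^ 2) ≤ Real.sqrt (2^2) := by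
    apply Real.sqrt_le_sqrt; nlinarith
  rwa [Real.sqrt_sq (by norm_num)] at this

/-- Any subset of the hexagon of diameter at most 1 can be rotated by a multiple of `60°`
so as to avoid the interiors of the two designated triangles of `H \ H'_σ`. -/
theorem exists_rotation_avoiding_two_triangles (σ : ℝ) (hσ0 : 0 ≤ σ) (hσ1 : σ < π / 18)
    (A : Set ℝ²) (hA : A ⊆ Hex) (hdiam : Metric.diam A ≤ 1) :
    ∃ k : Fin 6,
      rot ((k : ℕ) * π / 3) '' A ⊆ Hex ∧
      Disjoint (rot ((k : ℕ) * π / 3) '' A) {x | 1 / 2 < ⟪x, v σ 0⟫} ∧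
      Disjoint (rot ((k : ℕ) * π / 3) '' A) {x | 1 / 2 < ⟪x, v σ 2⟫} := by
  have hAb : Bornology.IsBounded A := hex_bounded.subset hA
  have hopp : ∀ j : Fin 6, bad σ A j → bad σ A (j+3) → False := by
    rintro j ⟨x, hx, hx2⟩ ⟨y, hy, hy2⟩
    rw [v_opp] at hy2
    have hle : ⟪x - y, v σ j⟫ ≤ ‖x - y‖ * ‖v σ j‖ := real_inner_le_norm _ _
    rw [norm_v, mul_one, inner_sub_left] at hle
    have hd : dist x y ≤ 1 := le_trans (Metric.dist_le_diam_of_mem hAb hx hy) hdiam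
    rw [dist_eq_norm] at hd
    linarith
  have hpair : ∃ j : Fin 6, ¬ bad σ A j ∧ ¬ bad σ A (j+2) := by
    by_contra hcon
    push_neg at hcon
    have h' : ∀ j : Fin 6, bad σ A j ∨ bad σ A (j+2) := fun j =>
      or_iff_not_imp_left.mpr (fun h1 => hcon j h1)
    have c0 : bad σ A 0 ∨ bad σ A 2 := by simpa only [show ((0:Fin 6)+2) = 2 from by decide] using h' 0
    have c1 : bad σ A 1 ∨ bad σ A 3 := by simpa only [show ((1:Fin 6)+2) = 3 from by decide] using h' 1
    have c2 : bad σ A 2 ∨ bad σ A 4 := by simpa only [show ((2:Fin 6)+2) = 4 from by decide] using h' 2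
    have c3 : bad σ A 3 ∨ bad σ A 5 := by simpa only [show ((3:Fin 6)+2) = 5 from by decide] using h' 3
    have c4 : bad σ A 4 ∨ bad σ A 0 := by simpa only [show ((4:Fin 6)+2) = 0 from by decide] using h' 4
    have c5 : bad σ A 5 ∨ bad σ A 1 := by simpa only [show ((5:Fin 6)+2) = 1 from by decide] using h' 5
    have o0 : bad σ A 0 → bad σ A 3 → False := by
      have e : ((0:Fin 6)+3) = 3 := by decide
      intro p q; exact hopp 0 p (e ▸ q)
    have o1 : bad σ A 1 → bad σ A 4 → False := by
      have e : ((1:Fin 6)+3) = 4 := by decide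
      intro p q; exact hopp 1 p (e ▸ q)
    have o2 : bad σ A 2 → bad σ A 5 → False := by
      have e : ((2:Fin 6)+3) = 5 := by decide
      intro p q; exact hopp 2 p (e ▸ q)
    rcases c0 with h0|h2
    · exact o0 h0 (c1.resolve_left (fun h1 => o1 h1 (c2.resolve_left (fun h2 =>
        o2 h2 (c3.resolve_left (fun h3 => o0 h0 h3))))))
    · have h0 := c4.resolve_left (fun h4 => o1 (c5.resolve_left (fun h5 => o2 h2 h5)) h4)
      exact o2 h2 (c3.resolve_left (fun h3 => o0 h0 h3))
  obtain ⟨j, hj0, hj2⟩ := hpair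
  refine ⟨-j, ?_, ?_, ?_⟩
  · rintro _ ⟨x, hx, rfl⟩ i
    rw [inner_rot_u]
    exact hA hx _
  · rw [Set.disjoint_left]
    rintro _ ⟨x, hx, rfl⟩ hmem
    rw [Set.mem_setOf_eq, inner_rot_v, show (0 : Fin 6) - (-j) = j by simp] at hmem
    exact hj0 ⟨x, hx, hmem⟩
  · rw [Set.disjoint_left]
    rintro _ ⟨x, hx, rfl⟩ hmem
    rw [Set.mem_setOf_eq, inner_rot_v,
      show (2 : Fin 6) - (-j) = j + 2 by rw [sub_neg_eq_add, add_comm]] at hmem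
    exact hj2 ⟨x, hx, hmem⟩
end
end

section
/- For every real x with 0 ≤ x ≤ 2 − √3, the number y = (1 − √3·x − √(1 − 2√3·x − x²))/2 satisfies 0 ≤ y ≤ x and the quadratic relation ((√3·y)/2 + x)² + (1 − y/2)² = 1. -/
/-- One step of Hansen's recursion: if `0 ≤ x ≤ 2 - √3` then
`y = (1 - √3·x - √(1 - 2√3·x - x²))/2` satisfies `0 ≤ y ≤ x` and the quadratic relation
`((√3·y)/2 + x)² + (1 - y/2)² = 1`. -/
theorem hansen_recursion_step (x y : ℝ) (hx0 : 0 ≤ x) (hx1 : x ≤ 2 - Real.sqrt 3)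
    (hy : y = (1 - Real.sqrt 3 * x - Real.sqrt (1 - 2 * Real.sqrt 3 * x - x ^ 2)) / 2) :
    0 ≤ y ∧ y ≤ x ∧ (Real.sqrt 3 * y / 2 + x) ^ 2 + (1 - y / 2) ^ 2 = 1 := by
  have hs : Real.sqrt 3 ^ 2 = 3 := Real.sq_sqrt (by norm_num)
  have hs0 : (0:ℝ) ≤ Real.sqrt 3 := Real.sqrt_nonneg 3
  set s := Real.sqrt 3 with hsdef
  have hs2 : s ≤ 2 := by nlinarith
  have hD : 0 ≤ 1 - 2 * s * x - x ^ 2 := by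
    nlinarith [mul_nonneg (by linarith : (0:ℝ) ≤ 2 - s - x) (by linarith : (0:ℝ) ≤ 2 + s + x)]
  set r := Real.sqrt (1 - 2 * s * x - x ^ 2) with hrdef
  have hr0 : 0 ≤ r := Real.sqrt_nonneg _
  have hr2 : r ^ 2 = 1 - 2 * s * x - x ^ 2 := Real.sq_sqrt hD
  have hsx : s * x ≤ 1 := by nlinarith
  have hrle : r ≤ 1 - s * x := by
    nlinarith [sq_nonneg x, sq_nonneg (r - (1 - s*x))]
  have hrge : 1 - s * x - 2 * x ≤ r := by
    rcases le_or_gt (1 - s * x - 2 * x) 0 with h | h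
    · linarith
    · nlinarith [sq_nonneg (r - (1 - s*x - 2*x)), mul_nonneg hx0 (by nlinarith : (0:ℝ) ≤ 1 - (2+s)*x)]
  refine ⟨by rw [hy]; linarith, by rw [hy]; linarith, ?_⟩
  subst hy
  field_simp
  nlinarith [hr2, hs]
end
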